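/- A signed graph (G, σ) admits a circular p/q-coloring (p even, p ≥ 2q > 0) if and only if (G, σ) admits an edge-sign preserving homomorphism to the signed circular clique K^s_{p;q}. -/

import Mathlib

/-- A signed graph: two symmetric edge relations (positive and negative edges).
Parallel edges of different signs (digons) and negative loops are representable;
positive loops are disallowed (graphs in the paper have no loops unless specified,
loops occurring in circular cliques are always negative). -/
structure SGraph (V : Type) where
  pos : V → V → Prop
  neg : V → V → Prop
  pos_symm : ∀ u v, pos u v → pos v u
  neg_symm : ∀ u v, neg u v → neg v u
  pos_irrefl : ∀ v, ¬ pos v v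

namespace SGraph

variable {V W : Type}

/-- An edge-sign preserving homomorphism: preserves adjacency and edge signs. -/
def IsSpHom (G : SGraph V) (H : SGraph W) (f : V → W) : Prop :=
  (∀ u v, G.pos u v → H.pos (f u) (f v)) ∧ (∀ u v, G.neg u v → H.neg (f u) (f v))

/-- The signed graph obtained from `G` by switching at the set of vertices where `s` is `true`:
the sign of an edge is flipped exactly when its endpoints get different values of `s`. -/
def switch (G : SGraph V) (s : V → Bool) : SGraph V where
  pos u v := (s u = s v ∧ G.pos u v) ∨ (s u ≠ s v ∧ G.neg u v)
  neg u v := (s u = s v ∧ G.neg u v) ∨ (s u ≠ s v ∧ G.pos u v)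
  pos_symm := by
    rintro u v (⟨h, hp⟩ | ⟨h, hn⟩)
    · exact Or.inl ⟨h.symm, G.pos_symm u v hp⟩
    · exact Or.inr ⟨fun e => h e.symm, G.neg_symm u v hn⟩
  neg_symm := by
    rintro u v (⟨h, hn⟩ | ⟨h, hp⟩)
    · exact Or.inl ⟨h.symm, G.neg_symm u v hn⟩
    · exact Or.inr ⟨fun e => h e.symm, G.pos_symm u v hp⟩
  pos_irrefl := by
    rintro v (⟨_, hp⟩ | ⟨h, _⟩)
    · exact G.pos_irrefl v hp
    · exact h rfl

/-- A switching homomorphism: an edge-sign preserving homomorphism after switching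
at a suitable set of vertices of the source (equivalently, a vertex map preserving
adjacency and the signs of closed walks). -/
def SwHom (G : SGraph V) (H : SGraph W) : Prop :=
  ∃ (s : V → Bool) (f : V → W), (G.switch s).IsSpHom H f

/-- The underlying graph of the signed graph is bipartite. -/
def Bipartite (G : SGraph V) : Prop :=
  ∃ c : V → Bool, ∀ u v, G.pos u v ∨ G.neg u v → c u ≠ c v

end SGraph

/-- `x` reduced modulo `r` into `[0, r)` (for `r > 0`). -/
noncomputable def rmod (x r : ℝ) : ℝ := x - r * ⌊x / r⌋

/-- The circular distance between the points `x` and `y` of the circle of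
circumference `r` (the length of the shorter arc joining them). -/
noncomputable def cdist (r x y : ℝ) : ℝ := min (rmod (x - y) r) (rmod (y - x) r)

namespace SGraph

variable {V : Type}

/-- A circular `r`-coloring of a signed graph: vertices get points of a circle of
circumference `r` such that the endpoints of each positive edge are at circular
distance at least `1`, and each endpoint of a negative edge is at circular distance
at least `1` from the antipode of the other endpoint (equivalently, the endpoints of
a negative edge are at circular distance at most `r/2 - 1`). -/
def IsCircColoring (G : SGraph V) (r : ℝ) (φ : V → ℝ) : Prop :=
  (∀ u v, G.pos u v → 1 ≤ cdist r (φ u) (φ v)) ∧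
  (∀ u v, G.neg u v → 1 ≤ cdist r (φ u) (φ v + r / 2))

/-- The circular chromatic number of a signed graph. -/
noncomputable def circChrom (G : SGraph V) : ℝ :=
  sInf {r : ℝ | 1 ≤ r ∧ ∃ φ : V → ℝ, G.IsCircColoring r φ}

end SGraph

/-- The signed circular clique `K^s_{p;q}` on vertices `{0, …, p-1}`:
`ij` is a positive edge iff `q ≤ |i-j| ≤ p-q`, and `ij` is a negative edge iff
`|i-j| ≤ p/2 - q` or `|i-j| ≥ p/2 + q` (stated multiplied by `2` to avoid division;
`p` is even in all uses).  In particular there is a negative loop at every vertex. -/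
def Ksclique (p q : ℕ) : SGraph (Fin p) where
  pos i j := i ≠ j ∧ (q : ℤ) ≤ |(i.val : ℤ) - (j.val : ℤ)| ∧
    |(i.val : ℤ) - (j.val : ℤ)| ≤ (p : ℤ) - q
  neg i j := 2 * |(i.val : ℤ) - (j.val : ℤ)| ≤ (p : ℤ) - 2 * q ∨
    (p : ℤ) + 2 * q ≤ 2 * |(i.val : ℤ) - (j.val : ℤ)|
  pos_symm := by
    rintro i j ⟨hne, h1, h2⟩
    refine ⟨hne.symm, ?_, ?_⟩ <;> rwa [abs_sub_comm]
  neg_symm := by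
    rintro i j (h | h)
    · left; rwa [abs_sub_comm]
    · right; rwa [abs_sub_comm]
  pos_irrefl := fun i h => h.1 rfl

/-- The signed bipartite circular clique `B_{p;q}`: the subgraph of `K^s_{p;q}`
consisting of the edges joining an even-labelled vertex to an odd-labelled vertex,
with the inherited signs. -/
def Bclique (p q : ℕ) : SGraph (Fin p) where
  pos i j := (Ksclique p q).pos i j ∧ i.val % 2 ≠ j.val % 2
  neg i j := (Ksclique p q).neg i j ∧ i.val % 2 ≠ j.val % 2
  pos_symm := by
    rintro i j ⟨h, hp⟩
    exact ⟨(Ksclique p q).pos_symm i j h, fun e => hp e.symm⟩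
  neg_symm := by
    rintro i j ⟨h, hp⟩
    exact ⟨(Ksclique p q).neg_symm i j h, fun e => hp e.symm⟩
  pos_irrefl := fun i h => h.2 rfl

section AuxLemmas

lemma rmod_eq_mul_fract {r : ℝ} (hr : r ≠ 0) (x : ℝ) :
    rmod x r = r * Int.fract (x / r) := by
  unfold rmod Int.fract
  rw [mul_sub, mul_div_cancel₀ _ hr]

lemma floor_cast_div (a : ℤ) (p : ℕ) : ⌊(a:ℝ)/(p:ℝ)⌋ = a / (p:ℤ) := by
  rw [show (a:ℝ)/(p:ℝ) = ((a / p : ℚ) : ℝ) by push_cast; ring, Rat.floor_cast,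
    Rat.floor_intCast_div_natCast]

lemma core_lemma {p q : ℕ} (hq : 0 < q) (hp : 0 < p) (x y : ℝ)
    (h1 : 1 ≤ rmod (x - y) ((p:ℝ)/q)) (h2 : 1 ≤ rmod (y - x) ((p:ℝ)/q)) :
    (q:ℤ) ≤ (⌊(q:ℝ)*x⌋ - ⌊(q:ℝ)*y⌋) % p ∧ (⌊(q:ℝ)*x⌋ - ⌊(q:ℝ)*y⌋) % p ≤ (p:ℤ) - q := by
  have hq' : (0:ℝ) < q := by exact_mod_cast hq
  have hp' : (0:ℝ) < p := by exact_mod_cast hp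
  set r : ℝ := (p:ℝ)/q with hrdef
  have hr : 0 < r := div_pos hp' hq'
  have hqr : (q:ℝ) * r = p := by rw [hrdef, mul_div_cancel₀ _ hq'.ne']
  have hf1 : rmod (x - y) r = r * Int.fract ((x - y) / r) := rmod_eq_mul_fract hr.ne' _
  have hf2 : rmod (y - x) r = r * Int.fract ((y - x) / r) := rmod_eq_mul_fract hr.ne' _
  have hfx : Int.fract ((x - y) / r) ≠ 0 := by
    intro h0
    rw [hf1, h0, mul_zero] at h1; linarith
  have hneg : Int.fract ((y - x) / r) = 1 - Int.fract ((x - y) / r) := by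
    rw [show (y - x)/r = -((x - y)/r) by ring]
    exact Int.fract_neg hfx
  have hub : rmod (x - y) r ≤ r - 1 := by
    rw [hf2, hneg, mul_sub, mul_one] at h2
    rw [hf1]; linarith
  set k : ℤ := ⌊(x - y)/r⌋ with hkdef
  have hrm : rmod (x - y) r = (x - y) - r * k := rfl
  rw [hrm] at h1 hub
  set m : ℤ := ⌊(q:ℝ)*x⌋ with hmdef
  set n : ℤ := ⌊(q:ℝ)*y⌋ with hndef
  have hm1 : (m:ℝ) ≤ (q:ℝ)*x := Int.floor_le _
  have hm2 : (q:ℝ)*x < m + 1 := Int.lt_floor_add_one _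
  have hn1 : (n:ℝ) ≤ (q:ℝ)*y := Int.floor_le _
  have hn2 : (q:ℝ)*y < n + 1 := Int.lt_floor_add_one _
  have e1 : (q:ℝ) * ((x - y) - r * k) = (q:ℝ)*x - (q:ℝ)*y - (p:ℝ)*k := by
    rw [← hqr]; ring
  have hA : (q:ℝ) ≤ (q:ℝ)*x - (q:ℝ)*y - (p:ℝ)*k := by
    rw [← e1]
    calc (q:ℝ) = (q:ℝ)*1 := (mul_one _).symm
      _ ≤ _ := mul_le_mul_of_nonneg_left h1 hq'.le
  have hB : (q:ℝ)*x - (q:ℝ)*y - (p:ℝ)*k ≤ (p:ℝ) - q := by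
    rw [← e1]
    calc (q:ℝ)*((x - y) - r*k) ≤ (q:ℝ)*(r - 1) := mul_le_mul_of_nonneg_left hub hq'.le
      _ = (p:ℝ) - q := by rw [mul_sub, hqr, mul_one]
  have key1 : (q:ℤ) ≤ m - n - p * k := by
    have hreal : ((q:ℤ):ℝ) < ((m - n - p*k : ℤ):ℝ) + 1 := by push_cast; linarith
    have hint : (q:ℤ) < m - n - p*k + 1 := by exact_mod_cast hreal
    omega
  have key2 : m - n - p*k ≤ (p:ℤ) - q := by
    have hreal : ((m - n - p*k : ℤ):ℝ) < ((p:ℤ):ℝ) - (q:ℤ) + 1 := by push_cast; linarith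
    have hint : m - n - p*k < (p:ℤ) - (q:ℤ) + 1 := by exact_mod_cast hreal
    omega
  have h0 : (0:ℤ) ≤ m - n - p*k := by
    have : (0:ℤ) ≤ (q:ℤ) := by exact_mod_cast Nat.zero_le q
    omega
  have hlt : m - n - p*k < p := by omega
  have hmod : (m - n) % p = m - n - p * k := by
    conv_lhs => rw [show m - n = (m - n - p*k) + p*k by ring]
    rw [Int.add_mul_emod_self_left, Int.emod_eq_of_lt h0 hlt]
  rw [hmod]; exact ⟨key1, key2⟩

lemma rmod_int_div {p q : ℕ} (hq : 0 < q) (hp : 0 < p) (a : ℤ) :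
    rmod ((a:ℝ)/q) ((p:ℝ)/q) = ((a % p : ℤ) : ℝ) / q := by
  have hq' : (0:ℝ) < q := by exact_mod_cast hq
  have hp' : (0:ℝ) < p := by exact_mod_cast hp
  unfold rmod
  rw [show ((a:ℝ)/q) / ((p:ℝ)/q) = (a:ℝ)/(p:ℝ) by field_simp, floor_cast_div]
  rw [Int.emod_def]
  push_cast
  field_simp

lemma pos_goal {p q : ℕ} (hq : 0 < q) (hpq : 2*q ≤ p) (m n : ℤ)
    (k1 : (q:ℤ) ≤ (m - n) % p) (k2 : (m - n) % p ≤ (p:ℤ) - q) :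
    m % p ≠ n % p ∧ (q:ℤ) ≤ |m % p - n % p| ∧ |m % p - n % p| ≤ (p:ℤ) - q := by
  have hp0 : 0 < p := by omega
  have hp0' : (0:ℤ) < p := by exact_mod_cast hp0
  have hq1 : (1:ℤ) ≤ q := by exact_mod_cast hq
  have hpq' : 2*(q:ℤ) ≤ p := by exact_mod_cast hpq
  have hI0 : 0 ≤ m % (p:ℤ) := Int.emod_nonneg m hp0'.ne'
  have hI1 : m % (p:ℤ) < p := Int.emod_lt_of_pos m hp0'
  have hJ0 : 0 ≤ n % (p:ℤ) := Int.emod_nonneg n hp0'.ne'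
  have hJ1 : n % (p:ℤ) < p := Int.emod_lt_of_pos n hp0'
  have hIm : m % (p:ℤ) = m - p * (m / p) := Int.emod_def m p
  have hJn : n % (p:ℤ) = n - p * (n / p) := Int.emod_def n p
  have he : (m - n) % (p:ℤ) = m - n - p * ((m - n) / p) := Int.emod_def _ _
  have hps : (p:ℤ) * ((m - n)/(p:ℤ) - m/(p:ℤ) + n/(p:ℤ))
      = m % (p:ℤ) - n % (p:ℤ) - (m - n) % (p:ℤ) := by
    rw [hIm, hJn, he]; ring
  set s : ℤ := (m - n)/(p:ℤ) - m/(p:ℤ) + n/(p:ℤ) with hsdef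
  have hs1 : s < 1 := by
    have hlt : (p:ℤ) * s < p * 1 := by rw [mul_one]; linarith
    exact lt_of_mul_lt_mul_left hlt hp0'.le
  have hs2 : -2 < s := by
    have hlt : (p:ℤ) * (-2) < p * s := by
      have h2p : (p:ℤ) * (-2) = -(2*p) := by ring
      rw [h2p]; linarith
    exact lt_of_mul_lt_mul_left hlt hp0'.le
  have hd : m % (p:ℤ) - n % (p:ℤ) = (m-n) % (p:ℤ) - p ∨
      m % (p:ℤ) - n % (p:ℤ) = (m-n) % (p:ℤ) := by
    have hss : s = -1 ∨ s = 0 := by omega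
    rcases hss with hss | hss <;> rw [hss] at hps <;> omega
  refine ⟨by omega, ?_, ?_⟩ <;>
    rcases abs_cases (m % (p:ℤ) - n % (p:ℤ)) with ⟨ha, _⟩ | ⟨ha, _⟩ <;> rw [ha] <;> omega

lemma neg_goal {p q : ℕ} (t : ℤ) (hq : 0 < q) (hpq : 2*q ≤ p) (hpt : (p:ℤ) = 2*t) (m n : ℤ)
    (k1 : (q:ℤ) ≤ (m - n - t) % p) (k2 : (m - n - t) % p ≤ (p:ℤ) - q) :
    2 * |m % p - n % p| ≤ (p:ℤ) - 2*q ∨ (p:ℤ) + 2*q ≤ 2 * |m % p - n % p| := by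
  have hp0 : 0 < p := by omega
  have hp0' : (0:ℤ) < p := by exact_mod_cast hp0
  have hq1 : (1:ℤ) ≤ q := by exact_mod_cast hq
  have hpq' : 2*(q:ℤ) ≤ p := by exact_mod_cast hpq
  have hI0 : 0 ≤ m % (p:ℤ) := Int.emod_nonneg m hp0'.ne'
  have hI1 : m % (p:ℤ) < p := Int.emod_lt_of_pos m hp0'
  have hJ0 : 0 ≤ n % (p:ℤ) := Int.emod_nonneg n hp0'.ne'
  have hJ1 : n % (p:ℤ) < p := Int.emod_lt_of_pos n hp0'
  have hIm : m % (p:ℤ) = m - p * (m / p) := Int.emod_def m p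
  have hJn : n % (p:ℤ) = n - p * (n / p) := Int.emod_def n p
  have he : (m - n - t) % (p:ℤ) = m - n - t - p * ((m - n - t) / p) := Int.emod_def _ _
  have hps : (p:ℤ) * ((m - n - t)/(p:ℤ) - m/(p:ℤ) + n/(p:ℤ))
      = m % (p:ℤ) - n % (p:ℤ) - (m - n - t) % (p:ℤ) - t := by
    rw [hIm, hJn, he]; ring
  set s : ℤ := (m - n - t)/(p:ℤ) - m/(p:ℤ) + n/(p:ℤ) with hsdef
  have hs1 : s < 1 := by
    have hlt : (p:ℤ) * s < p * 1 := by rw [mul_one]; omega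
    exact lt_of_mul_lt_mul_left hlt hp0'.le
  have hs2 : -3 < s := by
    have hlt : (p:ℤ) * (-3) < p * s := by
      have h3p : (p:ℤ) * (-3) = -(3*p) := by ring
      rw [h3p]; omega
    exact lt_of_mul_lt_mul_left hlt hp0'.le
  have hd : m % (p:ℤ) - n % (p:ℤ) = (m-n-t) % (p:ℤ) + t - 2*p ∨
      m % (p:ℤ) - n % (p:ℤ) = (m-n-t) % (p:ℤ) + t - p ∨
      m % (p:ℤ) - n % (p:ℤ) = (m-n-t) % (p:ℤ) + t := by
    have hss : s = -2 ∨ s = -1 ∨ s = 0 := by omega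
    rcases hss with hss | hss | hss <;> rw [hss] at hps <;> omega
  rcases abs_cases (m % (p:ℤ) - n % (p:ℤ)) with ⟨ha, _⟩ | ⟨ha, _⟩ <;> rw [ha] <;> omega

lemma back_bound {p : ℕ} {b : ℤ} (hp0' : (0:ℤ) < p) (hlo : -(2*(p:ℤ)) < b) (hhi : b < 2*p) :
    b % (p:ℤ) = b + 2*p ∨ b % (p:ℤ) = b + p ∨ b % (p:ℤ) = b ∨ b % (p:ℤ) = b - p := by
  have hB0 : 0 ≤ b % (p:ℤ) := Int.emod_nonneg b hp0'.ne'
  have hB1 : b % (p:ℤ) < p := Int.emod_lt_of_pos b hp0'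
  have hb : b % (p:ℤ) = b - p * (b / p) := Int.emod_def b p
  have hu1 : b / (p:ℤ) < 2 := by
    have hlt : (p:ℤ) * (b / p) < p * 2 := by omega
    exact lt_of_mul_lt_mul_left hlt hp0'.le
  have hu2 : -3 < b / (p:ℤ) := by
    have hlt : (p:ℤ) * (-3) < p * (b / p) := by
      have h3p : (p:ℤ) * (-3) = -(3*p) := by ring
      rw [h3p]; omega
    exact lt_of_mul_lt_mul_left hlt hp0'.le
  have hss : b / (p:ℤ) = -2 ∨ b / (p:ℤ) = -1 ∨ b / (p:ℤ) = 0 ∨ b / (p:ℤ) = 1 := by omega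
  rcases hss with h | h | h | h <;> rw [h] at hb <;> omega

lemma pos_back {p q : ℕ} (hq : 0 < q) (hpq : 2*q ≤ p) {a : ℤ}
    (hr1 : -(p:ℤ) < a) (hr2 : a < p) (hlo : (q:ℤ) ≤ |a|) (hhi : |a| ≤ (p:ℤ) - q) :
    (q:ℤ) ≤ a % p ∧ (q:ℤ) ≤ (-a) % p := by
  have hp0' : (0:ℤ) < p := by exact_mod_cast (by omega : 0 < p)
  have h1 := back_bound hp0' (b := a) (by omega) (by omega)
  have h2 := back_bound hp0' (b := -a) (by omega) (by omega)
  have hB0 : 0 ≤ a % (p:ℤ) := Int.emod_nonneg a hp0'.ne'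
  have hB1 : a % (p:ℤ) < p := Int.emod_lt_of_pos a hp0'
  have hC0 : 0 ≤ (-a) % (p:ℤ) := Int.emod_nonneg (-a) hp0'.ne'
  have hC1 : (-a) % (p:ℤ) < p := Int.emod_lt_of_pos (-a) hp0'
  rcases abs_cases a with ⟨ha, _⟩ | ⟨ha, _⟩ <;> rw [ha] at hlo hhi <;>
    constructor <;> omega

lemma neg_back {p q : ℕ} (t : ℤ) (hq : 0 < q) (hpq : 2*q ≤ p) (hpt : (p:ℤ) = 2*t) {a : ℤ}
    (hr1 : -(p:ℤ) < a) (hr2 : a < p)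
    (hcond : 2*|a| ≤ (p:ℤ) - 2*(q:ℤ) ∨ (p:ℤ) + 2*(q:ℤ) ≤ 2*|a|) :
    (q:ℤ) ≤ (a - t) % p ∧ (q:ℤ) ≤ (t - a) % p := by
  have hp0' : (0:ℤ) < p := by exact_mod_cast (by omega : 0 < p)
  have h1 := back_bound hp0' (b := a - t) (by omega) (by omega)
  have h2 := back_bound hp0' (b := t - a) (by omega) (by omega)
  have hB0 : 0 ≤ (a - t) % (p:ℤ) := Int.emod_nonneg _ hp0'.ne'
  have hB1 : (a - t) % (p:ℤ) < p := Int.emod_lt_of_pos _ hp0'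
  have hC0 : 0 ≤ (t - a) % (p:ℤ) := Int.emod_nonneg _ hp0'.ne'
  have hC1 : (t - a) % (p:ℤ) < p := Int.emod_lt_of_pos _ hp0'
  have hq1 : (1:ℤ) ≤ q := by exact_mod_cast hq
  have hpq' : 2*(q:ℤ) ≤ p := by exact_mod_cast hpq
  rcases abs_cases a with ⟨ha, _⟩ | ⟨ha, _⟩ <;> rw [ha] at hcond <;>
    constructor <;> omega

end AuxLemmas

/-- for `p` even with `p ≥ 2q > 0`, a signed graph admits a circular
`p/q`-coloring iff it admits an edge-sign preserving homomorphism to `K^s_{p;q}`. -/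
theorem circular_coloring_iff_spHom_Ksclique {V : Type} (G : SGraph V) (p q : ℕ)
    (hp : 2 ∣ p) (hq : 0 < q) (hpq : 2 * q ≤ p) :
    (∃ φ : V → ℝ, G.IsCircColoring ((p : ℝ) / q) φ) ↔
      ∃ f : V → Fin p, G.IsSpHom (Ksclique p q) f := by
  obtain ⟨t, rfl⟩ := hp
  have hp0 : 0 < 2 * t := by omega
  have hp0' : (0:ℤ) < ((2*t : ℕ):ℤ) := by exact_mod_cast hp0
  have hq' : (0:ℝ) < (q:ℝ) := by exact_mod_cast hq
  have hpt : ((2*t : ℕ):ℤ) = 2 * (t:ℤ) := by push_cast; ring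
  constructor
  · rintro ⟨φ, hcp, hcn⟩
    have hbound : ∀ z : ℤ, (z % ((2*t : ℕ):ℤ)).toNat < 2 * t := by
      intro z
      have h1 := Int.emod_nonneg z hp0'.ne'
      have h2 := Int.emod_lt_of_pos z hp0'
      omega
    refine ⟨fun v => ⟨(⌊(q:ℝ) * φ v⌋ % ((2*t : ℕ):ℤ)).toNat, hbound _⟩, ?_, ?_⟩
    · intro u v huv
      have hc := hcp u v huv
      unfold cdist at hc
      rw [le_min_iff] at hc
      obtain ⟨k1, k2⟩ := core_lemma hq hp0 (φ u) (φ v) hc.1 hc.2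
      obtain ⟨r1, r2, r3⟩ := pos_goal hq hpq _ _ k1 k2
      have hI0 : (0:ℤ) ≤ ⌊(q:ℝ) * φ u⌋ % ((2*t : ℕ):ℤ) := Int.emod_nonneg _ hp0'.ne'
      have hJ0 : (0:ℤ) ≤ ⌊(q:ℝ) * φ v⌋ % ((2*t : ℕ):ℤ) := Int.emod_nonneg _ hp0'.ne'
      refine ⟨?_, ?_, ?_⟩
      · intro hEq
        simp only [Fin.mk.injEq] at hEq
        omega
      · show (q:ℤ) ≤ |((⌊(q:ℝ) * φ u⌋ % ((2*t : ℕ):ℤ)).toNat : ℤ)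
            - ((⌊(q:ℝ) * φ v⌋ % ((2*t : ℕ):ℤ)).toNat : ℤ)|
        rw [Int.toNat_of_nonneg hI0, Int.toNat_of_nonneg hJ0]
        exact r2
      · show |((⌊(q:ℝ) * φ u⌋ % ((2*t : ℕ):ℤ)).toNat : ℤ)
            - ((⌊(q:ℝ) * φ v⌋ % ((2*t : ℕ):ℤ)).toNat : ℤ)| ≤ (((2*t:ℕ)):ℤ) - q
        rw [Int.toNat_of_nonneg hI0, Int.toNat_of_nonneg hJ0]
        exact r3
    · intro u v huv
      have hc := hcn u v huv
      unfold cdist at hc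
      rw [le_min_iff] at hc
      obtain ⟨k1, k2⟩ := core_lemma hq hp0 (φ u) (φ v + ((2*t : ℕ):ℝ)/(q:ℝ)/2) hc.1 hc.2
      have hfl : ⌊(q:ℝ) * (φ v + ((2*t : ℕ):ℝ)/(q:ℝ)/2)⌋ = ⌊(q:ℝ) * φ v⌋ + (t:ℤ) := by
        rw [show (q:ℝ) * (φ v + ((2*t : ℕ):ℝ)/(q:ℝ)/2) = (q:ℝ) * φ v + ((t:ℤ):ℝ) by
          push_cast; field_simp]
        exact Int.floor_add_intCast _ _
      rw [hfl, show ⌊(q:ℝ) * φ u⌋ - (⌊(q:ℝ) * φ v⌋ + (t:ℤ))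
          = ⌊(q:ℝ) * φ u⌋ - ⌊(q:ℝ) * φ v⌋ - (t:ℤ) from by ring] at k1 k2
      have res := neg_goal (t:ℤ) hq hpq hpt _ _ k1 k2
      have hI0 : (0:ℤ) ≤ ⌊(q:ℝ) * φ u⌋ % ((2*t : ℕ):ℤ) := Int.emod_nonneg _ hp0'.ne'
      have hJ0 : (0:ℤ) ≤ ⌊(q:ℝ) * φ v⌋ % ((2*t : ℕ):ℤ) := Int.emod_nonneg _ hp0'.ne'
      show 2 * |((⌊(q:ℝ) * φ u⌋ % ((2*t : ℕ):ℤ)).toNat : ℤ)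
            - ((⌊(q:ℝ) * φ v⌋ % ((2*t : ℕ):ℤ)).toNat : ℤ)| ≤ (((2*t:ℕ)):ℤ) - 2*(q:ℤ) ∨
          (((2*t:ℕ)):ℤ) + 2*(q:ℤ) ≤ 2 * |((⌊(q:ℝ) * φ u⌋ % ((2*t : ℕ):ℤ)).toNat : ℤ)
            - ((⌊(q:ℝ) * φ v⌋ % ((2*t : ℕ):ℤ)).toNat : ℤ)|
      rw [Int.toNat_of_nonneg hI0, Int.toNat_of_nonneg hJ0]
      exact res
  · rintro ⟨f, hfp, hfn⟩
    refine ⟨fun v => (((f v).val : ℕ) : ℝ)/(q:ℝ), ?_, ?_⟩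
    · intro u v huv
      obtain ⟨hne, h1, h2⟩ := hfp u v huv
      have hru1 : -(((2*t : ℕ):ℤ)) < ((f u).val : ℤ) - ((f v).val : ℤ) := by
        have := (f u).isLt; have := (f v).isLt; omega
      have hru2 : ((f u).val : ℤ) - ((f v).val : ℤ) < ((2*t : ℕ):ℤ) := by
        have := (f u).isLt; have := (f v).isLt; omega
      obtain ⟨g1, g2⟩ := pos_back hq hpq hru1 hru2 h1 h2
      show (1:ℝ) ≤ cdist (((2*t : ℕ):ℝ)/(q:ℝ)) _ _
      unfold cdist
      have hd1 : (((f u).val : ℕ) : ℝ)/(q:ℝ) - (((f v).val : ℕ) : ℝ)/(q:ℝ)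
          = (((((f u).val : ℤ) - ((f v).val : ℤ)) : ℤ) : ℝ)/(q:ℝ) := by push_cast; ring
      have hd2 : (((f v).val : ℕ) : ℝ)/(q:ℝ) - (((f u).val : ℕ) : ℝ)/(q:ℝ)
          = (((-(((f u).val : ℤ) - ((f v).val : ℤ))) : ℤ) : ℝ)/(q:ℝ) := by push_cast; ring
      rw [hd1, hd2, rmod_int_div hq hp0, rmod_int_div hq hp0]
      refine le_min ?_ ?_ <;> rw [one_le_div hq']
      · exact_mod_cast g1
      · exact_mod_cast g2
    · intro u v huv
      have hcond := hfn u v huv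
      have hru1 : -(((2*t : ℕ):ℤ)) < ((f u).val : ℤ) - ((f v).val : ℤ) := by
        have := (f u).isLt; have := (f v).isLt; omega
      have hru2 : ((f u).val : ℤ) - ((f v).val : ℤ) < ((2*t : ℕ):ℤ) := by
        have := (f u).isLt; have := (f v).isLt; omega
      obtain ⟨g1, g2⟩ := neg_back (t:ℤ) hq hpq hpt hru1 hru2 hcond
      show (1:ℝ) ≤ cdist (((2*t : ℕ):ℝ)/(q:ℝ)) _ _
      unfold cdist
      have hd1 : (((f u).val : ℕ) : ℝ)/(q:ℝ)
            - ((((f v).val : ℕ) : ℝ)/(q:ℝ) + ((2*t : ℕ):ℝ)/(q:ℝ)/2)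
          = ((((((f u).val : ℤ) - ((f v).val : ℤ)) - (t:ℤ)) : ℤ) : ℝ)/(q:ℝ) := by
        push_cast; field_simp; ring
      have hd2 : ((((f v).val : ℕ) : ℝ)/(q:ℝ) + ((2*t : ℕ):ℝ)/(q:ℝ)/2)
            - (((f u).val : ℕ) : ℝ)/(q:ℝ)
          = ((((t:ℤ) - (((f u).val : ℤ) - ((f v).val : ℤ))) : ℤ) : ℝ)/(q:ℝ) := by
        push_cast; field_simp; ring
      rw [hd1, hd2, rmod_int_div hq hp0, rmod_int_div hq hp0]
      refine le_min ?_ ?_ <;> rw [one_le_div hq']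
      · exact_mod_cast g1
      · exact_mod_cast g2
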